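/- Let $g$ be a $C^{n+1}$-smooth function on $[1,2]$ such that $\max_{1 \leq k \leq n} \min_{x \in [1,2]} |\partial^k g(x)| = \sigma > 0$ and $|g'|_{C^n} = \beta$. Then for every $\rho > 0$, $\operatorname{meas}\{x \in [1,2] : |g(x)| \leq \rho\} \leq C_n \left(\frac{\beta}{\sigma} + 1\right)\left(\frac{\rho}{\sigma}\right)^{1/n}$, where $C_n$ depends only on $n$. -/

import Mathlib

open Set MeasureTheory

lemma diam_aux (f : ℝ → ℝ) (a b σ ρ : ℝ) (hσ : 0 < σ)
    (hdiff : ∀ x ∈ Icc a b, DifferentiableAt ℝ f x)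
    (hder : ∀ x ∈ Ioo a b, σ ≤ |deriv f x|) :
    ∀ x ∈ Icc a b, |f x| ≤ ρ → ∀ y ∈ Icc a b, |f y| ≤ ρ → |x - y| ≤ 2 * ρ / σ := by
  have key : ∀ x ∈ Icc a b, |f x| ≤ ρ → ∀ y ∈ Icc a b, |f y| ≤ ρ → x ≤ y →
      |x - y| ≤ 2 * ρ / σ := by
    intro x hx hfx y hy hfy hxy
    rcases eq_or_lt_of_le hxy with rfl | hlt
    · simp only [sub_self, abs_zero]
      have hρ : 0 ≤ ρ := le_trans (abs_nonneg _) hfx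
      positivity
    · have hsub : Icc x y ⊆ Icc a b := Icc_subset_Icc hx.1 hy.2
      obtain ⟨c, hc, hc'⟩ := exists_deriv_eq_slope f hlt
        (fun z hz => (hdiff z (hsub hz)).continuousAt.continuousWithinAt)
        (fun z hz => (hdiff z (hsub (Ioo_subset_Icc_self hz))).differentiableWithinAt)
      have hcab : c ∈ Ioo a b := ⟨lt_of_le_of_lt hx.1 hc.1, lt_of_lt_of_le hc.2 hy.2⟩
      have h1 : σ * (y - x) ≤ |f y - f x| := by
        have := hder c hcab
        rw [hc'] at this
        rw [abs_div, abs_of_pos (by linarith : (0:ℝ) < y - x)] at this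
        calc σ * (y - x) ≤ (|f y - f x| / (y - x)) * (y - x) := by
              apply mul_le_mul_of_nonneg_right this (by linarith)
          _ = |f y - f x| := by
              rw [div_mul_cancel₀ _ (by linarith : y - x ≠ 0)]
      have h2 : |f y - f x| ≤ 2 * ρ := by
        calc |f y - f x| ≤ |f y| + |f x| := abs_sub _ _
          _ ≤ 2 * ρ := by linarith
      rw [abs_sub_comm, abs_of_pos (by linarith : (0:ℝ) < y - x)]
      rw [le_div_iff₀ hσ]
      nlinarith
  intro x hx hfx y hy hfy
  rcases le_total x y with h | h
  · exact key x hx hfx y hy hfy h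
  · rw [abs_sub_comm]; exact key y hy hfy x hx hfx h

lemma vol_aux {E : Set ℝ} {D : ℝ} (h : ∀ x ∈ E, ∀ y ∈ E, |x - y| ≤ D) :
    volume E ≤ ENNReal.ofReal (2 * D) := by
  rcases E.eq_empty_or_nonempty with rfl | ⟨e, he⟩
  · simp
  · have hsub : E ⊆ Icc (e - D) (e + D) := by
      intro x hx
      have := h x hx e he
      rw [abs_sub_le_iff] at this
      constructor <;> linarith [this.1, this.2]
    calc volume E ≤ volume (Icc (e - D) (e + D)) := measure_mono hsub
      _ = ENNReal.ofReal (2 * D) := by rw [Real.volume_Icc]; ring_nf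

lemma lemA : ∀ k : ℕ, 1 ≤ k → ∀ (f : ℝ → ℝ) (a b σ ρ : ℝ), 0 < σ → 0 < ρ →
    (∀ j < k, ∀ x ∈ Icc a b, DifferentiableAt ℝ (iteratedDeriv j f) x) →
    (∀ x ∈ Ioo a b, σ ≤ |iteratedDeriv k f x|) →
    volume {x ∈ Icc a b | |f x| ≤ ρ}
      ≤ ENNReal.ofReal (4 * 3 ^ k * (ρ / σ) ^ ((1:ℝ) / k)) := by
  intro k hk
  induction k, hk using Nat.le_induction with
  | base =>
    intro f a b σ ρ hσ hρ hdiff hder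
    have hd0 : ∀ x ∈ Icc a b, DifferentiableAt ℝ f x := by
      intro x hx
      have := hdiff 0 one_pos x hx
      rwa [iteratedDeriv_zero] at this
    have hd1 : ∀ x ∈ Ioo a b, σ ≤ |deriv f x| := by
      intro x hx
      have := hder x hx
      rwa [iteratedDeriv_one] at this
    have pair := diam_aux f a b σ ρ hσ hd0 hd1
    have hvol : volume {x ∈ Icc a b | |f x| ≤ ρ} ≤ ENNReal.ofReal (2 * (2 * ρ / σ)) := by
      apply vol_aux
      intro x hx y hy
      exact pair x hx.1 hx.2 y hy.1 hy.2
    refine hvol.trans (ENNReal.ofReal_le_ofReal ?_)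
    have h1 : ((1:ℝ) / ((1:ℕ):ℝ)) = 1 := by norm_num
    rw [h1, Real.rpow_one, mul_div_assoc]
    nlinarith [div_pos hρ hσ]
  | succ k hk ih =>
    intro f a b σ ρ hσ hρ hdiff hder
    have hr : 0 < ρ / σ := div_pos hρ hσ
    set r := ρ / σ with hrdef
    set X : ℝ := r ^ ((1:ℝ) / ((k:ℝ) + 1)) with hXdef
    have hX : 0 < X := Real.rpow_pos_of_pos hr _
    set t : ℝ := σ * X with htdef
    have ht : 0 < t := mul_pos hσ hX
    have hk0 : (k : ℝ) ≠ 0 := Nat.cast_ne_zero.mpr (by omega)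
    have hk1 : ((k : ℝ) + 1) ≠ 0 := by positivity
    -- key exponent computation
    have hmul : r ^ ((k:ℝ) / ((k:ℝ) + 1)) * X = r := by
      rw [hXdef, ← Real.rpow_add hr,
        show (k:ℝ) / ((k:ℝ) + 1) + 1 / ((k:ℝ) + 1) = 1 by field_simp,
        Real.rpow_one]
    have h1 : ρ / t = r ^ ((k:ℝ) / ((k:ℝ) + 1)) := by
      rw [htdef, div_eq_iff (by positivity : σ * X ≠ 0),
        show r ^ ((k:ℝ) / ((k:ℝ) + 1)) * (σ * X) = σ * (r ^ ((k:ℝ) / ((k:ℝ) + 1)) * X) by ring,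
        hmul, hrdef]
      field_simp
    have hXt : (ρ / t) ^ ((1:ℝ) / ((k:ℕ):ℝ)) = X := by
      rw [h1, ← Real.rpow_mul hr.le,
        show (k:ℝ) / ((k:ℝ) + 1) * ((1:ℝ) / ((k:ℕ):ℝ)) = (1:ℝ) / ((k:ℝ) + 1) by
          field_simp]
    have h2X : 2 * t / σ = 2 * X := by
      rw [htdef]; field_simp
    -- the derivative of h := iteratedDeriv k f
    have hdiffh : ∀ x ∈ Icc a b, DifferentiableAt ℝ (iteratedDeriv k f) x :=
      fun x hx => hdiff k (Nat.lt_succ_self k) x hx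
    have hderh : ∀ x ∈ Ioo a b, σ ≤ |deriv (iteratedDeriv k f) x| := by
      intro x hx
      have := hder x hx
      rwa [iteratedDeriv_succ] at this
    have pair := diam_aux (iteratedDeriv k f) a b σ t hσ hdiffh hderh
    set A : Set ℝ := {x ∈ Icc a b | |iteratedDeriv k f x| ≤ t} with hAdef
    have ihdiff : ∀ j < k, ∀ x ∈ Icc a b, DifferentiableAt ℝ (iteratedDeriv j f) x :=
      fun j hj x hx => hdiff j (Nat.lt_succ_of_lt hj) x hx
    have hbound : ∀ x : ℝ, x ∈ Icc a b → x ∉ A → t ≤ |iteratedDeriv k f x| := by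
      intro x hx hxA
      by_contra hcon
      exact hxA ⟨hx, le_of_not_ge hcon⟩
    rcases A.eq_empty_or_nonempty with hAe | hAne
    · -- A empty : |iteratedDeriv k f| ≥ t everywhere
      have hd : ∀ x ∈ Ioo a b, t ≤ |iteratedDeriv k f x| := by
        intro x hx
        exact hbound x (Ioo_subset_Icc_self hx) (by rw [hAe]; exact notMem_empty x)
      have := ih f a b t ρ ht hρ ihdiff hd
      rw [hXt] at this
      refine this.trans (ENNReal.ofReal_le_ofReal ?_)
      have h3 : (3:ℝ) ^ k ≤ 3 ^ (k + 1) := by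
        apply pow_le_pow_right₀ (by norm_num) (Nat.le_succ k)
      push_cast [← hXdef]
      nlinarith [hX.le, pow_pos (show (0:ℝ) < 3 by norm_num) k]
    · -- A nonempty
      have hAcl : IsClosed A := by
        have hcont : ContinuousOn (iteratedDeriv k f) (Icc a b) :=
          fun x hx => (hdiffh x hx).continuousAt.continuousWithinAt
        have : A = Icc a b ∩ (iteratedDeriv k f) ⁻¹' (Icc (-t) t) := by
          ext x
          simp only [hAdef, mem_setOf_eq, mem_inter_iff, mem_preimage, mem_Icc, ← abs_le]
        rw [this]
        exact hcont.preimage_isClosed_of_isClosed isClosed_Icc isClosed_Icc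
      have hAcp : IsCompact A := isCompact_Icc.of_isClosed_subset hAcl (sep_subset _ _)
      set c := sInf A with hcdef
      set d := sSup A with hddef
      have hcA : c ∈ A := hAcp.sInf_mem hAne
      have hdA : d ∈ A := hAcp.sSup_mem hAne
      have hdc : d - c ≤ 2 * X := by
        have := pair c hcA.1 hcA.2 d hdA.1 hdA.2
        rw [h2X] at this
        calc d - c ≤ |c - d| := by rw [abs_sub_comm]; exact le_abs_self _
          _ ≤ 2 * X := this
      -- covering
      have hcover : {x ∈ Icc a b | |f x| ≤ ρ} ⊆
          {x ∈ Icc a c | |f x| ≤ ρ} ∪ (Icc c d ∪ {x ∈ Icc d b | |f x| ≤ ρ}) := by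
        intro x ⟨hx, hfx⟩
        rcases lt_or_ge x c with h | h
        · exact Or.inl ⟨⟨hx.1, h.le⟩, hfx⟩
        · rcases le_or_gt x d with h' | h'
          · exact Or.inr (Or.inl ⟨h, h'⟩)
          · exact Or.inr (Or.inr ⟨⟨h'.le, hx.2⟩, hfx⟩)
      -- IH on the two sides
      have hIH1 : volume {x ∈ Icc a c | |f x| ≤ ρ}
          ≤ ENNReal.ofReal (4 * 3 ^ k * X) := by
        have hb : ∀ x ∈ Ioo a c, t ≤ |iteratedDeriv k f x| := by
          intro x hx
          refine hbound x ⟨hx.1.le, hx.2.le.trans hcA.1.2⟩ ?_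
          intro hxA
          exact absurd (csInf_le hAcp.bddBelow hxA) (not_le.mpr hx.2)
        have := ih f a c t ρ ht hρ
          (fun j hj x hx => ihdiff j hj x ⟨hx.1, hx.2.trans hcA.1.2⟩) hb
        rwa [hXt] at this
      have hIH2 : volume {x ∈ Icc d b | |f x| ≤ ρ}
          ≤ ENNReal.ofReal (4 * 3 ^ k * X) := by
        have hb : ∀ x ∈ Ioo d b, t ≤ |iteratedDeriv k f x| := by
          intro x hx
          refine hbound x ⟨hdA.1.1.trans hx.1.le, hx.2.le⟩ ?_
          intro hxA
          exact absurd (le_csSup hAcp.bddAbove hxA) (not_le.mpr hx.1)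
        have := ih f d b t ρ ht hρ
          (fun j hj x hx => ihdiff j hj x ⟨hdA.1.1.trans hx.1, hx.2⟩) hb
        rwa [hXt] at this
      have hmid : volume (Icc c d) ≤ ENNReal.ofReal (2 * X) := by
        rw [Real.volume_Icc]
        exact ENNReal.ofReal_le_ofReal hdc
      calc volume {x ∈ Icc a b | |f x| ≤ ρ}
          ≤ volume ({x ∈ Icc a c | |f x| ≤ ρ} ∪ (Icc c d ∪ {x ∈ Icc d b | |f x| ≤ ρ})) :=
            measure_mono hcover
        _ ≤ volume {x ∈ Icc a c | |f x| ≤ ρ} + (volume (Icc c d) + volume {x ∈ Icc d b | |f x| ≤ ρ}) :=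
            le_trans (measure_union_le _ _) (by gcongr; exact measure_union_le _ _)
        _ ≤ ENNReal.ofReal (4 * 3 ^ k * X) + (ENNReal.ofReal (2 * X) + ENNReal.ofReal (4 * 3 ^ k * X)) := by
            gcongr
        _ ≤ ENNReal.ofReal (4 * 3 ^ (k + 1) * (ρ / σ) ^ ((1:ℝ) / ((k + 1 : ℕ):ℝ))) := by
            rw [← ENNReal.ofReal_add (by positivity) (by positivity),
              ← ENNReal.ofReal_add (by positivity) (by positivity)]
            apply ENNReal.ofReal_le_ofReal
            have hXX : (ρ / σ) ^ ((1:ℝ) / ((k + 1 : ℕ):ℝ)) = X := by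
              rw [hXdef]
              congr 1
              push_cast
              ring
            rw [hXX]
            nlinarith [hX.le, one_le_pow₀ (show (1:ℝ) ≤ 3 by norm_num) (n := k), pow_succ (3:ℝ) k]

open Set MeasureTheory

lemma deriv_aux (g : ℝ → ℝ) (n j : ℕ) (hg : ContDiffOn ℝ (n + 1) g (Icc 1 2))
    (hj : j ≤ n) {x : ℝ} (hx : x ∈ Ioo (1:ℝ) 2) :
    DifferentiableAt ℝ (iteratedDeriv j g) x := by
  have hs : IsOpen (Ioo (1:ℝ) 2) := isOpen_Ioo
  have h1 : ContDiffOn ℝ (n + 1) g (Ioo 1 2) := hg.mono Ioo_subset_Icc_self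
  have hlt : (j : WithTop ℕ∞) < (n : WithTop ℕ∞) + 1 := by
    exact_mod_cast Nat.lt_succ_of_le hj
  have h2 : DifferentiableWithinAt ℝ (iteratedDerivWithin j g (Ioo 1 2)) (Ioo 1 2) x :=
    h1.differentiableOn_iteratedDerivWithin hlt hs.uniqueDiffOn x hx
  have h3 : DifferentiableAt ℝ (iteratedDerivWithin j g (Ioo 1 2)) x :=
    h2.differentiableAt (hs.mem_nhds hx)
  have h4 : iteratedDerivWithin j g (Ioo 1 2) =ᶠ[nhds x] iteratedDeriv j g := by
    filter_upwards [hs.mem_nhds hx] with y hy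
    rw [iteratedDerivWithin_eq_iteratedFDerivWithin, iteratedDeriv_eq_iteratedFDeriv,
      iteratedFDerivWithin_of_isOpen j hs hy]
  exact (Filter.EventuallyEq.differentiableAt_iff h4).mp h3

theorem stmt5 (n : ℕ) (hn : 1 ≤ n) :
    ∃ C > 0, ∀ (g : ℝ → ℝ) (σ β ρ : ℝ), 0 < σ → 0 < ρ →
      ContDiffOn ℝ (n + 1) g (Set.Icc 1 2) →
      (∃ k, 1 ≤ k ∧ k ≤ n ∧ ∀ x ∈ Set.Icc (1:ℝ) 2, σ ≤ |iteratedDeriv k g x|) →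
      (∀ j ≤ n, ∀ x ∈ Set.Icc (1:ℝ) 2, |iteratedDeriv (j + 1) g x| ≤ β) →
      MeasureTheory.volume {x ∈ Set.Icc (1:ℝ) 2 | |g x| ≤ ρ}
        ≤ ENNReal.ofReal (C * (β / σ + 1) * (ρ / σ) ^ ((1:ℝ) / n)) := by
  refine ⟨4 * 3 ^ n, by positivity, ?_⟩
  rintro g σ β ρ hσ hρ hg ⟨k, hk1, hkn, hσk⟩ hβ
  have hr : 0 < ρ / σ := div_pos hρ hσ
  have h1mem : (1:ℝ) ∈ Icc (1:ℝ) 2 := by norm_num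
  have hσβ : σ ≤ β := by
    have h2 := hβ (k - 1) (le_trans (Nat.sub_le k 1) hkn) 1 h1mem
    rw [Nat.sub_add_cancel hk1] at h2
    exact le_trans (hσk 1 h1mem) h2
  have hβσ : 2 ≤ β / σ + 1 := by
    have : 1 ≤ β / σ := (one_le_div hσ).mpr hσβ
    linarith
  have h3kn : (3:ℝ) ^ k ≤ 3 ^ n := pow_le_pow_right₀ (by norm_num) hkn
  have h3n1 : (1:ℝ) ≤ 3 ^ n := one_le_pow₀ (by norm_num)
  have hXn : 0 ≤ (ρ / σ) ^ ((1:ℝ) / (n:ℝ)) := Real.rpow_nonneg hr.le _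
  rcases le_or_gt σ ρ with hcase | hcase
  · -- easy case: ρ ≥ σ
    have h1 : volume {x ∈ Icc (1:ℝ) 2 | |g x| ≤ ρ} ≤ ENNReal.ofReal 1 := by
      calc volume {x ∈ Icc (1:ℝ) 2 | |g x| ≤ ρ} ≤ volume (Icc (1:ℝ) 2) :=
            measure_mono (sep_subset _ _)
        _ = ENNReal.ofReal 1 := by rw [Real.volume_Icc]; norm_num
    refine h1.trans (ENNReal.ofReal_le_ofReal ?_)
    have hX1 : (1:ℝ) ≤ (ρ / σ) ^ ((1:ℝ) / (n:ℝ)) :=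
      Real.one_le_rpow ((one_le_div hσ).mpr hcase) (by positivity)
    have e1 : (1:ℝ) ≤ 4 * 3 ^ n * (β / σ + 1) := by nlinarith
    have := mul_le_mul e1 hX1 zero_le_one (by positivity)
    linarith
  · -- main case: ρ < σ
    set S := {x ∈ Icc (1:ℝ) 2 | |g x| ≤ ρ} with hSdef
    set A : ℕ → Set ℝ :=
      fun m => {x ∈ Icc (1 + 1/(m+3) : ℝ) (2 - 1/(m+3)) | |g x| ≤ ρ} with hAdef
    have hmono : Monotone A := by
      intro m m' hmm x hx
      have h3 : (0:ℝ) < (m:ℝ) + 3 := by positivity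
      have hle : (1:ℝ)/((m':ℝ)+3) ≤ 1/((m:ℝ)+3) := by
        apply one_div_le_one_div_of_le h3
        have : (m:ℝ) ≤ m' := Nat.cast_le.mpr hmm
        linarith
      exact ⟨⟨by linarith [hx.1.1], by linarith [hx.1.2]⟩, hx.2⟩
    have hcover : S ⊆ {1, 2} ∪ ⋃ m, A m := by
      intro x hx
      rcases eq_or_lt_of_le hx.1.1 with h1 | h1
      · exact Or.inl (Or.inl h1.symm)
      rcases eq_or_lt_of_le hx.1.2 with h2 | h2
      · exact Or.inl (Or.inr h2)
      · refine Or.inr (mem_iUnion.mpr ?_)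
        obtain ⟨m, hm⟩ := exists_nat_one_div_lt (show (0:ℝ) < min (x - 1) (2 - x) by
          rw [lt_min_iff]; constructor <;> linarith)
        have hmin := lt_min_iff.mp hm
        have hstep : (1:ℝ)/((m:ℝ)+3) ≤ 1/((m:ℝ)+1) := by
          apply one_div_le_one_div_of_le (by positivity)
          linarith
        exact ⟨m, ⟨⟨by linarith [hmin.1], by linarith [hmin.2]⟩, hx.2⟩⟩
    have hvol : volume S ≤ volume ({(1:ℝ), 2} : Set ℝ) + volume (⋃ m, A m) :=
      (measure_mono hcover).trans (measure_union_le _ _)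
    have h12 : volume ({(1:ℝ), 2} : Set ℝ) = 0 :=
      Set.Countable.measure_zero ((Set.countable_singleton (2:ℝ)).insert 1) _
    have hU : volume (⋃ m, A m) = ⨆ m, volume (A m) :=
      (hmono.directed_le).measure_iUnion
    have hbound : ∀ m, volume (A m)
        ≤ ENNReal.ofReal (4 * 3 ^ k * (ρ/σ) ^ ((1:ℝ)/(k:ℝ))) := by
      intro m
      have h3 : (0:ℝ) < 1/((m:ℝ)+3) := by positivity
      have hsub : Icc (1 + 1/((m:ℝ)+3)) (2 - 1/((m:ℝ)+3)) ⊆ Ioo (1:ℝ) 2 := by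
        intro x hx
        exact ⟨by linarith [hx.1], by linarith [hx.2]⟩
      exact lemA k hk1 g (1 + 1/((m:ℝ)+3)) (2 - 1/((m:ℝ)+3)) σ ρ hσ hρ
        (fun j hj x hx => deriv_aux g n j hg (by omega) (hsub hx))
        (fun x hx => hσk x (Ioo_subset_Icc_self (hsub (Ioo_subset_Icc_self hx))))
    have hfinal : (4:ℝ) * 3 ^ k * (ρ/σ) ^ ((1:ℝ)/(k:ℝ))
        ≤ 4 * 3 ^ n * (β/σ + 1) * (ρ/σ) ^ ((1:ℝ)/(n:ℝ)) := by
      have hrk : (ρ/σ) ^ ((1:ℝ)/(k:ℝ)) ≤ (ρ/σ) ^ ((1:ℝ)/(n:ℝ)) := by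
        apply Real.rpow_le_rpow_of_exponent_ge hr (le_of_lt ((div_lt_one hσ).mpr hcase))
        apply one_div_le_one_div_of_le (by exact_mod_cast hk1 : (0:ℝ) < (k:ℝ))
        exact_mod_cast hkn
      have h2 : (4:ℝ) * 3^k * (ρ/σ) ^ ((1:ℝ)/(k:ℝ)) ≤ 4 * 3^n * (ρ/σ) ^ ((1:ℝ)/(n:ℝ)) :=
        mul_le_mul (by nlinarith) hrk (Real.rpow_nonneg hr.le _) (by positivity)
      nlinarith [mul_nonneg (mul_nonneg (by norm_num : (0:ℝ) ≤ 4) (le_trans zero_le_one h3n1)) hXn]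
    calc volume S ≤ volume ({(1:ℝ), 2} : Set ℝ) + volume (⋃ m, A m) := hvol
      _ = ⨆ m, volume (A m) := by rw [h12, hU, zero_add]
      _ ≤ ENNReal.ofReal (4 * 3 ^ n * (β / σ + 1) * (ρ / σ) ^ ((1:ℝ) / n)) :=
          iSup_le fun m => (hbound m).trans (ENNReal.ofReal_le_ofReal hfinal)
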